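/- Let T₀ be the backward weighted shift on A^{(λ₀)}(𝔻) with weights w_n^{(λ₀)} = √((n+1)/(n+λ₀)) and S₀₁: A^{(λ₁)}(𝔻) → A^{(λ₀)}(𝔻) the diagonal operator S₀₁ f_n = s_n e_n with s_n = √(a_n(λ₀)/a_n(λ₁)), where λ₁ - λ₀ < 2. Then ‖n T₀^{n-1} S₀₁‖ → ∞ as n → ∞; in particular the 2×2 operator [[T₀, S₀₁],[0, T₁]] is not power bounded. -/

import Mathlib

open Filter Topology

/-- The Taylor coefficient `a_n(λ) = (λ)_n / n!` of `(1 - x)^{-λ}`. -/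
noncomputable def bergmanCoeff (lam : ℝ) (n : ℕ) : ℝ :=
  (ascPochhammer ℝ n).eval lam / n.factorial

lemma poch_prod (lam : ℝ) (n : ℕ) :
    (ascPochhammer ℝ n).eval lam = ∏ j ∈ Finset.range n, (lam + j) := by
  induction n with
  | zero => simp
  | succ n ih =>
    rw [ascPochhammer_succ_right, Polynomial.eval_mul, ih, Finset.prod_range_succ]
    simp [mul_comm]

lemma bergman_pos {lam : ℝ} (h : 0 < lam) (n : ℕ) : 0 < bergmanCoeff lam n := by
  unfold bergmanCoeff
  rw [poch_prod]
  apply div_pos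
  · exact Finset.prod_pos fun j _ => by positivity
  · exact_mod_cast n.factorial_pos

lemma bergman_succ (lam : ℝ) (n : ℕ) :
    bergmanCoeff lam (n + 1) = bergmanCoeff lam n * ((lam + n) / (n + 1)) := by
  unfold bergmanCoeff
  rw [poch_prod, poch_prod, Finset.prod_range_succ, Nat.factorial_succ]
  have h1 : ((n + 1).factorial : ℝ) ≠ 0 := by exact_mod_cast (n+1).factorial_ne_zero
  have h2 : (n.factorial : ℝ) ≠ 0 := by exact_mod_cast n.factorial_ne_zero
  field_simp
  push_cast
  ring_nf

lemma bergman_prod_Ico (lam : ℝ) (k m : ℕ) :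
    bergmanCoeff lam (k + m) =
      bergmanCoeff lam k * ∏ j ∈ Finset.Ico k (k + m), ((lam + j) / (j + 1)) := by
  induction m with
  | zero => simp
  | succ m ih =>
    rw [show k + (m+1) = (k + m) + 1 from rfl, bergman_succ, ih,
      Finset.prod_Ico_succ_top (Nat.le_add_right k m)]
    ring

lemma bergman_gammaSeq {lam : ℝ} (h : 0 < lam) (n : ℕ) :
    Real.GammaSeq lam n * (lam + n) * bergmanCoeff lam n = (n : ℝ) ^ lam := by
  have h2 : (n.factorial : ℝ) ≠ 0 := by exact_mod_cast n.factorial_ne_zero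
  have h3 : (∏ j ∈ Finset.range n, (lam + (j:ℝ))) ≠ 0 :=
    ne_of_gt (Finset.prod_pos fun j _ => by positivity)
  have h4 : lam + (n:ℝ) ≠ 0 := by positivity
  unfold Real.GammaSeq bergmanCoeff
  rw [poch_prod, Finset.prod_range_succ]
  field_simp

lemma sqrt_tendsto_atTop : Filter.Tendsto Real.sqrt atTop atTop := by
  apply tendsto_atTop_atTop_of_monotone (fun a b h => Real.sqrt_le_sqrt h)
  intro b
  exact ⟨(max b 0) ^ 2, by rw [Real.sqrt_sq (le_max_right b 0)]; exact le_max_left b 0⟩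

lemma core {lam₀ lam₁ : ℝ} (h0 : 0 < lam₀) (h01 : lam₀ < lam₁) (hgap : lam₁ - lam₀ < 2) :
    Tendsto (fun n : ℕ =>
      (n : ℝ) * Real.sqrt (bergmanCoeff lam₀ (n - 1) / bergmanCoeff lam₁ (2 * (n - 1))))
      atTop atTop := by
  have h1 : 0 < lam₁ := h0.trans h01
  -- GammaSeq positivity at relevant points
  have hGpos : ∀ (lam : ℝ), 0 < lam → ∀ m : ℕ, 1 ≤ m → 0 < Real.GammaSeq lam m := by
    intro lam hl m hm
    have hb := bergman_pos hl m
    have hid := bergman_gammaSeq hl m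
    have hm' : (0:ℝ) < (m:ℝ) ^ lam := by
      apply Real.rpow_pos_of_pos; exact_mod_cast hm
    nlinarith [hm', hb, mul_pos (show (0:ℝ) < lam + m by positivity) hb]
  -- the quantity squared
  set Q : ℕ → ℝ := fun n =>
    (n : ℝ) ^ 2 * (bergmanCoeff lam₀ (n - 1) / bergmanCoeff lam₁ (2 * (n - 1))) with hQdef
  have key : Tendsto Q atTop atTop := by
    set L : ℝ := Real.Gamma lam₁ / Real.Gamma lam₀ with hLdef
    have hL : 0 < L := div_pos (Real.Gamma_pos_of_pos h1) (Real.Gamma_pos_of_pos h0)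
    set F : ℕ → ℝ := fun n =>
      Real.GammaSeq lam₁ (2 * (n - 1)) / Real.GammaSeq lam₀ (n - 1) with hFdef
    have hsub : Tendsto (fun n : ℕ => n - 1) atTop atTop := tendsto_sub_atTop_nat 1
    have h2sub : Tendsto (fun n : ℕ => 2 * (n - 1)) atTop atTop :=
      tendsto_atTop_mono (fun n => by omega) hsub
    have hF : Tendsto F atTop (𝓝 L) :=
      ((Real.GammaSeq_tendsto_Gamma lam₁).comp h2sub).div
        ((Real.GammaSeq_tendsto_Gamma lam₀).comp hsub)
        (ne_of_gt (Real.Gamma_pos_of_pos h0))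
    set R : ℕ → ℝ := fun n =>
      2 ^ (-lam₁) * ((n : ℝ) ^ 2 * ((n : ℝ) - 1) ^ (lam₀ - lam₁)) *
        ((lam₁ + 2 * ((n : ℝ) - 1)) / (lam₀ + ((n : ℝ) - 1))) with hRdef
    have hR : Tendsto R atTop atTop := by
      have hexp : (0:ℝ) < 2 + lam₀ - lam₁ := by linarith
      have hg : Tendsto (fun n : ℕ => 2 ^ (-lam₁) * (n : ℝ) ^ (2 + lam₀ - lam₁)) atTop atTop :=
        ((tendsto_rpow_atTop hexp).comp tendsto_natCast_atTop_atTop).const_mul_atTop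
          (Real.rpow_pos_of_pos two_pos _)
      apply tendsto_atTop_mono' atTop _ hg
      filter_upwards [eventually_ge_atTop 2] with n hn
      have hn2 : (2:ℝ) ≤ (n:ℝ) := by exact_mod_cast hn
      have hm1 : (1:ℝ) ≤ (n:ℝ) - 1 := by linarith
      have hmpos : (0:ℝ) < (n:ℝ) - 1 := by linarith
      have hnpos : (0:ℝ) < (n:ℝ) := by linarith
      have hb : ((n:ℝ)) ^ (lam₀ - lam₁) ≤ ((n:ℝ) - 1) ^ (lam₀ - lam₁) :=
        Real.rpow_le_rpow_of_nonpos hmpos (by linarith) (by linarith)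
      have hratio : (1:ℝ) ≤ (lam₁ + 2 * ((n : ℝ) - 1)) / (lam₀ + ((n : ℝ) - 1)) := by
        rw [le_div_iff₀ (by linarith)]
        linarith
      have hsplit : (n:ℝ) ^ (2 + lam₀ - lam₁) = (n:ℝ) ^ 2 * (n:ℝ) ^ (lam₀ - lam₁) := by
        rw [show (2 + lam₀ - lam₁ : ℝ) = 2 + (lam₀ - lam₁) by ring,
          Real.rpow_add hnpos, Real.rpow_two]
      have hstep1 : 2 ^ (-lam₁) * (n : ℝ) ^ (2 + lam₀ - lam₁) ≤
          2 ^ (-lam₁) * ((n : ℝ) ^ 2 * ((n : ℝ) - 1) ^ (lam₀ - lam₁)) := by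
        rw [hsplit]
        apply mul_le_mul_of_nonneg_left _ (Real.rpow_nonneg (by norm_num) _)
        exact mul_le_mul_of_nonneg_left hb (by positivity)
      calc 2 ^ (-lam₁) * (n : ℝ) ^ (2 + lam₀ - lam₁)
          ≤ 2 ^ (-lam₁) * ((n : ℝ) ^ 2 * ((n : ℝ) - 1) ^ (lam₀ - lam₁)) := hstep1
        _ ≤ R n := by
            rw [hRdef]
            exact le_mul_of_one_le_right (by positivity) hratio
    have hQR : ∀ᶠ n in atTop, F n * R n = Q n := by
      filter_upwards [eventually_ge_atTop 2] with n hn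
      have hm1 : 1 ≤ n - 1 := by omega
      have hm2 : 1 ≤ 2 * (n - 1) := by omega
      have hcast : ((n - 1 : ℕ) : ℝ) = (n : ℝ) - 1 := by
        have : 1 ≤ n := by omega
        push_cast [this]; ring
      have hcast2 : ((2 * (n - 1) : ℕ) : ℝ) = 2 * ((n : ℝ) - 1) := by push_cast [hcast]; ring
      set m : ℝ := (n : ℝ) - 1 with hmdef
      have hmpos : (0:ℝ) < m := by
        have : (2:ℝ) ≤ (n:ℝ) := by exact_mod_cast hn
        simp only [hmdef]; linarith
      have hG₀ : 0 < Real.GammaSeq lam₀ (n - 1) := hGpos lam₀ h0 _ hm1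
      have hG₁ : 0 < Real.GammaSeq lam₁ (2 * (n - 1)) := hGpos lam₁ h1 _ hm2
      have hb₀ : 0 < bergmanCoeff lam₀ (n - 1) := bergman_pos h0 _
      have hb₁ : 0 < bergmanCoeff lam₁ (2 * (n - 1)) := bergman_pos h1 _
      have hid₀ := bergman_gammaSeq h0 (n - 1)
      have hid₁ := bergman_gammaSeq h1 (2 * (n - 1))
      rw [hcast] at hid₀
      rw [hcast2] at hid₁
      -- rpow rewrites
      have hrw1 : (2 * m) ^ lam₁ = 2 ^ lam₁ * m ^ lam₁ :=
        Real.mul_rpow (by norm_num) hmpos.le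
      have hrw2 : m ^ (lam₀ - lam₁) = m ^ lam₀ / m ^ lam₁ := Real.rpow_sub hmpos _ _
      have hrw3 : (2:ℝ) ^ (-lam₁) = (2 ^ lam₁)⁻¹ := Real.rpow_neg (by norm_num) _
      have hml₀ : (0:ℝ) < lam₀ + m := by linarith
      have hml₁ : (0:ℝ) < lam₁ + 2 * m := by linarith
      have h2l : (0:ℝ) < (2:ℝ) ^ lam₁ := Real.rpow_pos_of_pos two_pos _
      have hml : (0:ℝ) < m ^ lam₁ := Real.rpow_pos_of_pos hmpos _
      rw [hrw1] at hid₁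
      simp only [hQdef, hFdef, hRdef, hrw2, hrw3, ← hmdef]
      field_simp
      linear_combination (m ^ lam₀) * hid₁ - (2 ^ lam₁ * m ^ lam₁) * hid₀
    exact Tendsto.congr' hQR (hF.pos_mul_atTop hL hR)
  have heq : ∀ n : ℕ, (n : ℝ) *
      Real.sqrt (bergmanCoeff lam₀ (n - 1) / bergmanCoeff lam₁ (2 * (n - 1))) =
      Real.sqrt (Q n) := by
    intro n
    rw [hQdef]
    rw [Real.sqrt_mul (by positivity), Real.sqrt_sq (n.cast_nonneg)]
  exact (sqrt_tendsto_atTop.comp key).congr fun n => (heq n).symm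

set_option maxHeartbeats 1000000 in
/-- Let `T₀` be the backward weighted Bergman shift with weights `√((n+1)/(n+λ₀))`
and `S₀₁` the diagonal intertwiner with weights `√(a_n(λ₀)/a_n(λ₁))`, `λ₁ - λ₀ < 2`.
Then `‖n T₀^{n-1} S₀₁‖ → ∞`; in particular `T = [[T₀, S₀₁],[0, T₁]]` is not
power bounded. -/
theorem stmt_16 {H₀ H₁ : Type*}
    [NormedAddCommGroup H₀] [InnerProductSpace ℂ H₀] [CompleteSpace H₀]
    [NormedAddCommGroup H₁] [InnerProductSpace ℂ H₁] [CompleteSpace H₁]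
    (lam₀ lam₁ : ℝ) (h0 : 0 < lam₀) (h01 : lam₀ < lam₁) (hgap : lam₁ - lam₀ < 2)
    (e : ℕ → H₀) (f : ℕ → H₁) (he : Orthonormal ℂ e) (hf : Orthonormal ℂ f)
    (hte : (Submodule.span ℂ (Set.range e)).topologicalClosure = ⊤)
    (htf : (Submodule.span ℂ (Set.range f)).topologicalClosure = ⊤)
    (T₀ : H₀ →L[ℂ] H₀) (T₁ : H₁ →L[ℂ] H₁) (S₀₁ : H₁ →L[ℂ] H₀)
    (hT₀z : T₀ (e 0) = 0)
    (hT₀ : ∀ n : ℕ, T₀ (e (n + 1)) =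
      ((Real.sqrt (((n : ℝ) + 1) / ((n : ℝ) + lam₀)) : ℝ) : ℂ) • e n)
    (hT₁z : T₁ (f 0) = 0)
    (hT₁ : ∀ n : ℕ, T₁ (f (n + 1)) =
      ((Real.sqrt (((n : ℝ) + 1) / ((n : ℝ) + lam₁)) : ℝ) : ℂ) • f n)
    (hS : ∀ n : ℕ, S₀₁ (f n) =
      ((Real.sqrt (bergmanCoeff lam₀ n / bergmanCoeff lam₁ n) : ℝ) : ℂ) • e n)
    (T : (H₀ × H₁) →L[ℂ] (H₀ × H₁))
    (hT : ∀ (x : H₀) (y : H₁), T (x, y) = (T₀ x + S₀₁ y, T₁ y)) :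
    Tendsto (fun n : ℕ => (n : ℝ) * ‖(T₀ ^ (n - 1)) ∘L S₀₁‖) atTop atTop ∧
    ¬ ∃ C : ℝ, ∀ n : ℕ, ‖T ^ n‖ ≤ C := by
  have h1 : 0 < lam₁ := h0.trans h01
  have hne : ∀ i, ‖e i‖ = 1 := fun i => he.1 i
  have hnf : ∀ i, ‖f i‖ = 1 := fun i => hf.1 i
  have hb₀ : ∀ n, 0 < bergmanCoeff lam₀ n := fun n => bergman_pos h0 n
  have hb₁ : ∀ n, 0 < bergmanCoeff lam₁ n := fun n => bergman_pos h1 n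
  -- powers of T₀ on the basis
  have hT₀pow : ∀ m k : ℕ, (T₀ ^ m) (e (k + m)) =
      ((Real.sqrt (∏ j ∈ Finset.Ico k (k + m), (((j:ℝ) + 1) / ((j:ℝ) + lam₀))) : ℝ) : ℂ)
        • e k := by
    intro m
    induction m with
    | zero => intro k; simp
    | succ m ih =>
      intro k
      have hP : 0 ≤ ∏ j ∈ Finset.Ico k (k + m), (((j:ℝ) + 1) / ((j:ℝ) + lam₀)) :=
        Finset.prod_nonneg fun j hj =>
          div_nonneg (by positivity) (add_nonneg j.cast_nonneg h0.le)
      have h1' : (T₀ ^ (m + 1)) (e (k + (m + 1))) = (T₀ ^ m) (T₀ (e ((k + m) + 1))) := by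
        rw [pow_succ, ContinuousLinearMap.mul_apply]
        rfl
      rw [h1', hT₀ (k + m), map_smul, ih k, smul_smul,
        show k + (m + 1) = (k + m) + 1 from rfl,
        Finset.prod_Ico_succ_top (Nat.le_add_right k m),
        Real.sqrt_mul hP, Complex.ofReal_mul, mul_comm]
  -- lower bound for the norm
  have hlow : ∀ n : ℕ,
      Real.sqrt (bergmanCoeff lam₀ (n - 1) / bergmanCoeff lam₁ (2 * (n - 1))) ≤
      ‖(T₀ ^ (n - 1)) ∘L S₀₁‖ := by
    intro n
    set m := n - 1 with hmdef
    have h2m : 2 * m = m + m := by omega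
    rw [h2m]
    have hval : ((T₀ ^ m) ∘L S₀₁) (f (m + m)) =
        ((Real.sqrt (bergmanCoeff lam₀ m / bergmanCoeff lam₁ (m + m)) : ℝ) : ℂ) • e m := by
      rw [ContinuousLinearMap.comp_apply, hS (m + m), map_smul, hT₀pow m m, smul_smul,
        ← Complex.ofReal_mul]
      congr 2
      rw [← Real.sqrt_mul (div_nonneg (hb₀ _).le (hb₁ _).le)]
      congr 1
      have hPpos : 0 < ∏ j ∈ Finset.Ico m (m + m), ((lam₀ + (j:ℝ)) / ((j:ℝ) + 1)) :=
        Finset.prod_pos fun j hj => by positivity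
      have hinv : ∏ j ∈ Finset.Ico m (m + m), (((j:ℝ) + 1) / ((j:ℝ) + lam₀)) =
          (∏ j ∈ Finset.Ico m (m + m), ((lam₀ + (j:ℝ)) / ((j:ℝ) + 1)))⁻¹ := by
        rw [← Finset.prod_inv_distrib]
        refine Finset.prod_congr rfl fun j hj => ?_
        rw [inv_div, add_comm lam₀ (j:ℝ)]
      rw [hinv, bergman_prod_Ico lam₀ m m, div_mul_eq_mul_div, mul_assoc,
        mul_inv_cancel₀ (ne_of_gt hPpos), mul_one]
    have hle := ((T₀ ^ m) ∘L S₀₁).le_opNorm (f (m + m))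
    rw [hval, norm_smul, Complex.norm_real, Real.norm_eq_abs,
      abs_of_nonneg (Real.sqrt_nonneg _), hne, mul_one, hnf, mul_one] at hle
    exact hle
  have part1 : Tendsto (fun n : ℕ => (n : ℝ) * ‖(T₀ ^ (n - 1)) ∘L S₀₁‖) atTop atTop :=
    tendsto_atTop_mono
      (fun n => mul_le_mul_of_nonneg_left (hlow n) n.cast_nonneg)
      (core h0 h01 hgap)
  refine ⟨part1, ?_⟩
  -- the intertwining relation
  have hdense : Dense (↑(Submodule.span ℂ (Set.range f)) : Set H₁) :=
    Submodule.dense_iff_topologicalClosure_eq_top.mpr htf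
  have hcomm : T₀.comp S₀₁ = S₀₁.comp T₁ := by
    apply ContinuousLinearMap.ext_on hdense
    rintro _ ⟨n, rfl⟩
    cases n with
    | zero =>
      simp only [ContinuousLinearMap.comp_apply]
      rw [hS 0, map_smul, hT₀z, hT₁z, smul_zero, map_zero]
    | succ n =>
      simp only [ContinuousLinearMap.comp_apply]
      rw [hS (n + 1), map_smul, hT₀ n, hT₁ n, map_smul, hS n, smul_smul, smul_smul,
        ← Complex.ofReal_mul, ← Complex.ofReal_mul]
      congr 2
      rw [← Real.sqrt_mul (div_nonneg (hb₀ _).le (hb₁ _).le),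
        ← Real.sqrt_mul (div_nonneg (by positivity) (add_nonneg n.cast_nonneg h1.le))]
      congr 1
      rw [bergman_succ lam₀ n, bergman_succ lam₁ n]
      have c0 : ((n:ℝ) + lam₀) ≠ 0 := by positivity
      have c1 : ((n:ℝ) + lam₁) ≠ 0 := by positivity
      have c2 : ((n:ℝ) + 1) ≠ 0 := by positivity
      have c3 : bergmanCoeff lam₁ n ≠ 0 := (hb₁ n).ne'
      have c0' : (lam₀ + (n:ℝ)) ≠ 0 := by positivity
      have c1' : (lam₁ + (n:ℝ)) ≠ 0 := by positivity
      field_simp [c0, c1, c2, c3, c0', c1']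
      ring
  have hcomm' : ∀ y : H₁, T₀ (S₀₁ y) = S₀₁ (T₁ y) := fun y =>
    ContinuousLinearMap.ext_iff.mp hcomm y
  have hint : ∀ m (y : H₁), S₀₁ ((T₁ ^ m) y) = (T₀ ^ m) (S₀₁ y) := by
    intro m
    induction m with
    | zero => intro y; simp
    | succ m ih =>
      intro y
      have ha : (T₁ ^ (m + 1)) y = (T₁ ^ m) (T₁ y) := by
        rw [pow_succ, ContinuousLinearMap.mul_apply]
      have hb : (T₀ ^ (m + 1)) (S₀₁ y) = (T₀ ^ m) (T₀ (S₀₁ y)) := by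
        rw [pow_succ, ContinuousLinearMap.mul_apply]
      rw [ha, ih (T₁ y), hb, hcomm' y]
  -- powers of T on (0, y)
  have hTn : ∀ (m : ℕ) (y : H₁), (T ^ (m + 1)) ((0 : H₀), y) =
      (((m : ℂ) + 1) • (T₀ ^ m) (S₀₁ y), (T₁ ^ (m + 1)) y) := by
    intro m
    induction m with
    | zero =>
      intro y
      rw [pow_one, pow_one, hT 0 y, pow_zero]
      simp
    | succ m ih =>
      intro y
      have ha : (T ^ (m + 2)) ((0 : H₀), y) = T ((T ^ (m + 1)) ((0 : H₀), y)) := by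
        rw [pow_succ', ContinuousLinearMap.mul_apply]
      rw [ha, ih y, hT]
      simp only [Prod.mk.injEq]
      constructor
      · rw [map_smul, hint (m + 1) y]
        have hb : (T₀ ^ (m + 1)) (S₀₁ y) = T₀ ((T₀ ^ m) (S₀₁ y)) := by
          rw [pow_succ', ContinuousLinearMap.mul_apply]
        rw [← hb]
        push_cast
        module
      · rw [← ContinuousLinearMap.mul_apply, ← pow_succ']
  -- norm bound for powers of T
  have hTnorm : ∀ m : ℕ, ((m : ℝ) + 1) * ‖(T₀ ^ m) ∘L S₀₁‖ ≤ ‖T ^ (m + 1)‖ := by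
    intro m
    have hnorm1 : ‖((m : ℂ) + 1) • ((T₀ ^ m) ∘L S₀₁)‖ ≤ ‖T ^ (m + 1)‖ := by
      apply ContinuousLinearMap.opNorm_le_bound _ (norm_nonneg (T ^ (m + 1)))
      intro y
      have h2 : ‖((m : ℂ) + 1) • (T₀ ^ m) (S₀₁ y)‖ ≤ ‖(T ^ (m + 1)) ((0 : H₀), y)‖ := by
        have h4 : ‖((m : ℂ) + 1) • (T₀ ^ m) (S₀₁ y)‖ ≤
            ‖((((m : ℂ) + 1) • (T₀ ^ m) (S₀₁ y), (T₁ ^ (m + 1)) y) : H₀ × H₁)‖ :=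
          norm_fst_le ((((m : ℂ) + 1) • (T₀ ^ m) (S₀₁ y), (T₁ ^ (m + 1)) y) : H₀ × H₁)
        rw [← hTn m y] at h4
        exact h4
      have h3 : ‖(T ^ (m + 1)) ((0 : H₀), y)‖ ≤ ‖T ^ (m + 1)‖ * ‖y‖ := by
        have := (T ^ (m + 1)).le_opNorm ((0 : H₀), y)
        rwa [show ‖((0 : H₀), y)‖ = ‖y‖ by
          rw [Prod.norm_def, norm_zero]; exact max_eq_right (norm_nonneg y)] at this
      calc ‖(((m : ℂ) + 1) • ((T₀ ^ m) ∘L S₀₁)) y‖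
          = ‖((m : ℂ) + 1) • (T₀ ^ m) (S₀₁ y)‖ := rfl
        _ ≤ ‖(T ^ (m + 1)) ((0 : H₀), y)‖ := h2
        _ ≤ ‖T ^ (m + 1)‖ * ‖y‖ := h3
    calc ((m : ℝ) + 1) * ‖(T₀ ^ m) ∘L S₀₁‖
        = ‖((m : ℂ) + 1) • ((T₀ ^ m) ∘L S₀₁)‖ := by
          rw [norm_smul ((m : ℂ) + 1) ((T₀ ^ m) ∘L S₀₁)]
          congr 1
          rw [show ((m : ℂ) + 1) = ((m + 1 : ℕ) : ℂ) by push_cast; ring,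
            Complex.norm_natCast]
          push_cast
          ring
      _ ≤ ‖T ^ (m + 1)‖ := hnorm1
  rintro ⟨C, hC⟩
  obtain ⟨N, hN⟩ := Filter.eventually_atTop.mp (part1.eventually_ge_atTop (C + 1))
  have key := hN (N + 1) (by omega)
  have h2 : ((N + 1 : ℕ) : ℝ) * ‖(T₀ ^ ((N + 1) - 1)) ∘L S₀₁‖ ≤ ‖T ^ (N + 1)‖ := by
    have := hTnorm N
    rw [show (N + 1) - 1 = N from rfl]
    push_cast
    exact this
  have h3 := hC (N + 1)
  linarith
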